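/- arXiv:2605.03723 — 3 statements merged into one kernel-verified Lean document; each statement's English description precedes it below -/
import Mathlib

section
/- Two-point minimax lower bound for change-point localization (Theorem 3). Let δ ∈ (0, 1/2), σ_1,…,σ_N > 0, reals μ_m ≠ μ_h with κ = |μ_m − μ_h|, and integers 1 ≤ τ < τ + h ≤ N such that Σ_{i=τ+1}^{τ+h} κ²/(2σ_i²) ≤ log(1/(4δ)). Let P_1 = ⊗_{i=1}^{N} N(m_i, σ_i²) with m_i = μ_m for i ≤ τ and m_i = μ_h for i > τ, and let P_2 = ⊗_{i=1}^{N} N(m'_i, σ_i²) with m'_i = μ_m for i ≤ τ + h and m'_i = μ_h for i > τ + h. Then for every measurable estimator τ̂ : ℝ^N → ℝ, max{ P_1(|τ̂ − τ| ≥ h/2), P_2(|τ̂ − (τ + h)| ≥ h/2) } ≥ δ. -/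
open MeasureTheory ProbabilityTheory Real

theorem aux_lintegral_pi_prod {n : ℕ} {E : Fin n → Type*} [∀ i, MeasurableSpace (E i)]
    (μ : ∀ i, Measure (E i)) [∀ i, SigmaFinite (μ i)]
    (f : ∀ i, E i → ENNReal) (hf : ∀ i, Measurable (f i)) :
    ∫⁻ x, ∏ i, f i (x i) ∂Measure.pi μ = ∏ i, ∫⁻ x, f i x ∂μ i := by
  induction n with
  | zero => simp
  | succ n ih =>
    have hmp := measurePreserving_piFinSuccAbove μ 0
    have h1 : ∫⁻ x, ∏ i, f i (x i) ∂Measure.pi μ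
        = ∫⁻ y : E 0 × (∀ j : Fin n, E ((0 : Fin (n+1)).succAbove j)),
            f 0 y.1 * ∏ j : Fin n, f ((0 : Fin (n+1)).succAbove j) (y.2 j)
            ∂((μ 0).prod (Measure.pi fun j => μ ((0 : Fin (n+1)).succAbove j))) := by
      rw [← hmp.lintegral_comp]
      · refine lintegral_congr fun x => ?_
        rw [Fin.prod_univ_succ]
        simp [MeasurableEquiv.piFinSuccAbove, Fin.zero_succAbove, Fin.tail]
        rfl
      · refine (hf 0).comp measurable_fst |>.mul ?_
        exact (Finset.measurable_prod _ fun j _ =>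
          (hf _).comp ((measurable_pi_apply j).comp measurable_snd))
    rw [h1, lintegral_prod_mul (f := f 0)
      (g := fun w : (∀ j : Fin n, E ((0 : Fin (n+1)).succAbove j)) =>
        ∏ j : Fin n, f ((0 : Fin (n+1)).succAbove j) (w j)) ((hf 0).aemeasurable)
      ((Finset.measurable_prod _ fun j _ => (hf _).comp (measurable_pi_apply j)).aemeasurable),
      ih (fun j => μ ((0 : Fin (n+1)).succAbove j)) (fun j => f _) (fun j => hf _),
      Fin.prod_univ_succ]
    simp [Fin.zero_succAbove]
    rfl


theorem aux_pi_withDensity {n : ℕ} {E : Fin n → Type*} [∀ i, MeasurableSpace (E i)]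
    (μ : ∀ i, Measure (E i)) [∀ i, SigmaFinite (μ i)]
    (f : ∀ i, E i → ENNReal) (hf : ∀ i, Measurable (f i))
    (ν : ∀ i, Measure (E i)) [∀ i, SigmaFinite (ν i)]
    (hν : ∀ i, ν i = (μ i).withDensity (f i)) :
    Measure.pi ν = (Measure.pi μ).withDensity fun x => ∏ i, f i (x i) := by

  refine Measure.pi_eq (μ := ν) fun s hs => ?_
  rw [withDensity_apply _ (MeasurableSet.univ_pi hs)]
  have key : ∀ x : ∀ i, E i, (Set.univ.pi s).indicator (fun x => ∏ i, f i (x i)) x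
      = ∏ i, (s i).indicator (f i) (x i) := by
    intro x
    by_cases hx : x ∈ Set.univ.pi s
    · rw [Set.indicator_of_mem hx]
      exact Finset.prod_congr rfl fun i _ =>
        (Set.indicator_of_mem (hx i (Set.mem_univ i)) _).symm
    · rw [Set.indicator_of_notMem hx]
      have : ∃ i, x i ∉ s i := by
        by_contra hc
        push_neg at hc
        exact hx fun i _ => hc i
      obtain ⟨i, hi⟩ := this
      exact (Finset.prod_eq_zero (Finset.mem_univ i)
        (by rw [Set.indicator_of_notMem hi])).symm
  rw [← lintegral_indicator (MeasurableSet.univ_pi hs)]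
  simp_rw [key]
  rw [aux_lintegral_pi_prod μ _ (fun i => (hf i).indicator (hs i))]
  refine Finset.prod_congr rfl fun i _ => ?_
  rw [hν i, withDensity_apply _ (hs i), lintegral_indicator (hs i)]


theorem aux_sqrt_pdf_mul' (m m' : ℝ) (v : NNReal) (hv : v ≠ 0) (x : ℝ) :
    gaussianPDFReal m v x * gaussianPDFReal m' v x
      = (Real.exp (-((m - m') ^ 2 / (8 * (v : ℝ)))) * gaussianPDFReal ((m + m') / 2) v x) ^ 2 := by
  have hvpos : (0 : ℝ) < v := lt_of_le_of_ne (v.coe_nonneg) (by exact_mod_cast (Ne.symm hv))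
  have h2v : (0:ℝ) < 2 * π * v := by positivity
  simp only [gaussianPDFReal]
  have hsq : ((√(2 * π * ↑v))⁻¹) ^ 2 = (2 * π * (v:ℝ))⁻¹ := by
    rw [← Real.sqrt_inv, Real.sq_sqrt (by positivity)]
  rw [mul_pow, mul_pow, hsq, ← Real.exp_nat_mul, ← Real.exp_nat_mul,
    show (√(2 * π * ↑v))⁻¹ * rexp (-(x - m) ^ 2 / (2 * ↑v)) *
        ((√(2 * π * ↑v))⁻¹ * rexp (-(x - m') ^ 2 / (2 * ↑v)))
      = ((√(2 * π * ↑v))⁻¹ ^ 2) * rexp (-(x - m) ^ 2 / (2 * ↑v) + -(x - m') ^ 2 / (2 * ↑v)) by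
      rw [Real.exp_add]; ring,
    hsq, mul_left_comm, ← Real.exp_add]
  congr 1
  rw [Real.exp_eq_exp]
  push_cast
  field_simp
  ring


theorem aux_hellinger (m m' : ℝ) (v : NNReal) (hv : v ≠ 0) :
    ∫⁻ x, (gaussianPDF m v x * gaussianPDF m' v x) ^ (2⁻¹ : ℝ)
      = ENNReal.ofReal (Real.exp (-((m - m') ^ 2 / (8 * (v : ℝ))))) := by
  have hpt : ∀ x, (gaussianPDF m v x * gaussianPDF m' v x) ^ (2⁻¹ : ℝ)
      = ENNReal.ofReal (Real.exp (-((m - m') ^ 2 / (8 * (v : ℝ))))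
          * gaussianPDFReal ((m + m') / 2) v x) := by
    intro x
    rw [gaussianPDF, gaussianPDF, ← ENNReal.ofReal_mul (gaussianPDFReal_nonneg _ _ _),
      ENNReal.ofReal_rpow_of_nonneg (mul_nonneg (gaussianPDFReal_nonneg _ _ _) (gaussianPDFReal_nonneg _ _ _)) (by norm_num),
      show ((gaussianPDFReal m v x * gaussianPDFReal m' v x) ^ (2⁻¹:ℝ))
        = Real.sqrt (gaussianPDFReal m v x * gaussianPDFReal m' v x) by
          rw [Real.sqrt_eq_rpow, one_div],
      aux_sqrt_pdf_mul' m m' v hv x, Real.sqrt_sq (mul_nonneg (Real.exp_nonneg _) (gaussianPDFReal_nonneg _ _ _))]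
  simp_rw [hpt]
  simp_rw [ENNReal.ofReal_mul (Real.exp_nonneg _)]
  rw [lintegral_const_mul _ ((measurable_gaussianPDFReal _ _).ennreal_ofReal),
    lintegral_gaussianPDFReal_eq_one _ hv, mul_one]


/-- **Two-point minimax lower bound for change-point localization.**
Let `δ ∈ (0, 1/2)`, `σ_i > 0`, `κ = |μ_m - μ_h| > 0`, and `1 ≤ τ < τ + h ≤ N` with
`Σ_{i=τ+1}^{τ+h} κ²/(2σ_i²) ≤ log(1/(4δ))`. With `P₁` the product Gaussian measure
whose mean changes from `μ_m` to `μ_h` after coordinate `τ` (1-based) and `P₂` the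
one changing after coordinate `τ + h`, every measurable estimator
`τ̂ : ℝ^N → ℝ` satisfies
`max{P₁(|τ̂ - τ| ≥ h/2), P₂(|τ̂ - (τ+h)| ≥ h/2)} ≥ δ`. -/
theorem two_point_minimax_lower_bound
    (N : ℕ) (σ : Fin N → NNReal) (hσ : ∀ i, 0 < σ i)
    (μm μh : ℝ) (hne : μm ≠ μh)
    (δ : ℝ) (hδ0 : 0 < δ) (hδhalf : δ < 1 / 2)
    (τ h : ℕ) (hτ1 : 1 ≤ τ) (hh : 0 < h) (hτhN : τ + h ≤ N)
    (hKL : ∑ i ∈ Finset.univ.filter (fun i : Fin N => τ ≤ (i : ℕ) ∧ (i : ℕ) < τ + h),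
        (μm - μh) ^ 2 / (2 * ((σ i : ℝ)) ^ 2) ≤ Real.log (1 / (4 * δ)))
    (P₁ P₂ : Measure (Fin N → ℝ))
    (hP₁ : P₁ = Measure.pi (fun i : Fin N =>
      gaussianReal (if (i : ℕ) < τ then μm else μh) ((σ i) ^ 2)))
    (hP₂ : P₂ = Measure.pi (fun i : Fin N =>
      gaussianReal (if (i : ℕ) < τ + h then μm else μh) ((σ i) ^ 2)))
    (τhat : (Fin N → ℝ) → ℝ) (hτhat : Measurable τhat) :
    ENNReal.ofReal δ ≤
      max (P₁ {x | (h : ℝ) / 2 ≤ |τhat x - (τ : ℝ)|})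
          (P₂ {x | (h : ℝ) / 2 ≤ |τhat x - ((τ : ℝ) + (h : ℝ))|}) := by
  -- setup
  set v : Fin N → NNReal := fun i => σ i ^ 2 with hv_def
  have hv : ∀ i, v i ≠ 0 := fun i => pow_ne_zero 2 (hσ i).ne'
  set m₁ : Fin N → ℝ := fun i => if (i : ℕ) < τ then μm else μh with hm₁
  set m₂ : Fin N → ℝ := fun i => if (i : ℕ) < τ + h then μm else μh with hm₂
  set f₁ : Fin N → ℝ → ENNReal := fun i => gaussianPDF (m₁ i) (v i) with hf₁def
  set f₂ : Fin N → ℝ → ENNReal := fun i => gaussianPDF (m₂ i) (v i) with hf₂def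
  have hf₁ : ∀ i, Measurable (f₁ i) := fun i => measurable_gaussianPDF _ _
  have hf₂ : ∀ i, Measurable (f₂ i) := fun i => measurable_gaussianPDF _ _
  set lamN : Measure (Fin N → ℝ) := Measure.pi fun _ => (volume : Measure ℝ) with hlamN
  set F₁ : (Fin N → ℝ) → ENNReal := fun x => ∏ i, f₁ i (x i) with hF₁def
  set F₂ : (Fin N → ℝ) → ENNReal := fun x => ∏ i, f₂ i (x i) with hF₂def
  have hF₁ : Measurable F₁ :=
    Finset.measurable_prod _ fun i _ => (hf₁ i).comp (measurable_pi_apply i)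
  have hF₂ : Measurable F₂ :=
    Finset.measurable_prod _ fun i _ => (hf₂ i).comp (measurable_pi_apply i)
  have hP₁' : P₁ = lamN.withDensity F₁ := by
    rw [hP₁]
    exact aux_pi_withDensity _ f₁ hf₁ _
      (fun i => gaussianReal_of_var_ne_zero _ (hv i))
  have hP₂' : P₂ = lamN.withDensity F₂ := by
    rw [hP₂]
    exact aux_pi_withDensity _ f₂ hf₂ _
      (fun i => gaussianReal_of_var_ne_zero _ (hv i))
  have hProb₂ : IsProbabilityMeasure P₂ := by rw [hP₂]; infer_instance
  have hProb₁ : IsProbabilityMeasure P₁ := by rw [hP₁]; infer_instance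
  -- the event
  set A : Set (Fin N → ℝ) := {x | (h : ℝ) / 2 ≤ |τhat x - (τ : ℝ)|} with hA_def
  have hA : MeasurableSet A := by
    have : Measurable fun x => |τhat x - (τ : ℝ)| := (hτhat.sub measurable_const).abs
    exact measurableSet_le measurable_const this
  have hsub : Aᶜ ⊆ {x | (h : ℝ) / 2 ≤ |τhat x - ((τ : ℝ) + (h : ℝ))|} := by
    intro x hx
    simp only [hA_def, Set.mem_compl_iff, Set.mem_setOf_eq, not_le] at hx
    simp only [Set.mem_setOf_eq]
    have htri : (h : ℝ) ≤ |τhat x - (τ : ℝ)| + |τhat x - ((τ : ℝ) + (h : ℝ))| := by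
      have h1 : (h : ℝ) = |(τhat x - ((τ : ℝ))) - (τhat x - ((τ : ℝ) + (h : ℝ)))| := by
        rw [show (τhat x - ((τ : ℝ))) - (τhat x - ((τ : ℝ) + (h : ℝ))) = (h : ℝ) by ring,
          abs_of_nonneg (by positivity)]
      exact h1.le.trans (abs_sub (τhat x - (τ : ℝ)) (τhat x - ((τ : ℝ) + (h : ℝ))))
    linarith
  -- Hellinger computation
  set g : Fin N → ℝ → ENNReal := fun i y => (f₁ i y * f₂ i y) ^ (2⁻¹ : ℝ) with hgdef
  have hg : ∀ i, Measurable (g i) := fun i => ((hf₁ i).mul (hf₂ i)).pow_const _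
  set G : (Fin N → ℝ) → ENNReal := fun x => ∏ i, g i (x i) with hGdef
  have hG : Measurable G :=
    Finset.measurable_prod _ fun i _ => (hg i).comp (measurable_pi_apply i)
  have hGsplit : ∀ x, G x = F₁ x ^ (2⁻¹ : ℝ) * F₂ x ^ (2⁻¹ : ℝ) := by
    intro x
    rw [hGdef]
    simp only
    rw [← ENNReal.prod_rpow_of_nonneg (by norm_num), ← ENNReal.prod_rpow_of_nonneg (by norm_num),
      ← Finset.prod_mul_distrib]
    exact Finset.prod_congr rfl fun i _ => ENNReal.mul_rpow_of_nonneg _ _ (by norm_num)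
  -- value of the Hellinger affinity
  set S : ℝ := ∑ i ∈ Finset.univ.filter (fun i : Fin N => τ ≤ (i : ℕ) ∧ (i : ℕ) < τ + h),
      (μm - μh) ^ 2 / (2 * ((σ i : ℝ)) ^ 2) with hS_def
  have hS0 : 0 ≤ S := Finset.sum_nonneg fun i _ => by positivity
  have hHel : ∫⁻ x, G x ∂lamN = ENNReal.ofReal (Real.exp (-(S / 4))) := by
    rw [hlamN, aux_lintegral_pi_prod _ g hg]
    have : ∀ i, ∫⁻ y, g i y = ENNReal.ofReal (Real.exp (-((m₁ i - m₂ i) ^ 2 / (8 * (v i : ℝ))))) :=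
      fun i => aux_hellinger _ _ _ (hv i)
    simp_rw [this]
    rw [← ENNReal.ofReal_prod_of_nonneg (fun i _ => (Real.exp_nonneg _)), ← Real.exp_sum]
    congr 2
    have hsum : ∑ i, -((m₁ i - m₂ i) ^ 2 / (8 * (v i : ℝ)))
        = ∑ i ∈ Finset.univ.filter (fun i : Fin N => τ ≤ (i : ℕ) ∧ (i : ℕ) < τ + h),
            -((m₁ i - m₂ i) ^ 2 / (8 * (v i : ℝ))) := by
      symm
      refine Finset.sum_subset (Finset.filter_subset _ _) ?_
      intro i _ hi
      simp only [Finset.mem_filter, Finset.mem_univ, true_and, not_and, not_lt] at hi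
      have : m₁ i = m₂ i := by
        by_cases hcase : (i : ℕ) < τ
        · simp [hm₁, hm₂, hcase, hcase.trans_le (Nat.le_add_right τ h)]
        · have h2 : ¬ (i : ℕ) < τ + h := not_lt.mpr (hi (not_lt.mp hcase))
          simp [hm₁, hm₂, hcase, h2]
      rw [this]
      simp
    rw [hsum, Finset.sum_neg_distrib, hS_def, Finset.sum_div, neg_inj]
    refine Finset.sum_congr rfl fun i hi => ?_
    simp only [Finset.mem_filter, Finset.mem_univ, true_and] at hi
    have e1 : m₁ i = μh := by simp [hm₁, not_lt.mpr hi.1]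
    have e2 : m₂ i = μm := by simp [hm₂, hi.2]
    rw [e1, e2]
    have : ((v i : ℝ)) = ((σ i : ℝ)) ^ 2 := by simp [hv_def]
    rw [this]
    have hσi : ((σ i : ℝ)) ≠ 0 := by exact_mod_cast (hσ i).ne'
    rw [show (μh - μm) ^ 2 = (μm - μh) ^ 2 by ring, div_div]
    congr 1
    ring
  -- Hoelder on a set
  have hconj : (2:ℝ).HolderConjugate 2 := .two_two
  have hHolder : ∀ s : Set (Fin N → ℝ), MeasurableSet s →
      ∫⁻ x in s, G x ∂lamN ≤ (P₁ s) ^ (2⁻¹:ℝ) * (P₂ s) ^ (2⁻¹:ℝ) := by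
    intro s hs
    have hH := ENNReal.lintegral_mul_le_Lp_mul_Lq (lamN.restrict s) hconj
      (f := fun x => F₁ x ^ (2⁻¹:ℝ)) (g := fun x => F₂ x ^ (2⁻¹:ℝ))
      ((hF₁.pow_const _).aemeasurable) ((hF₂.pow_const _).aemeasurable)
    have hpow : ∀ y : ENNReal, (y ^ (2⁻¹:ℝ)) ^ (2:ℝ) = y := by
      intro y
      rw [← ENNReal.rpow_mul]
      norm_num
    simp only [Pi.mul_apply, hpow] at hH
    calc ∫⁻ x in s, G x ∂lamN = ∫⁻ x in s, F₁ x ^ (2⁻¹:ℝ) * F₂ x ^ (2⁻¹:ℝ) ∂lamN := by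
          exact lintegral_congr fun x => hGsplit x
      _ ≤ (∫⁻ x in s, F₁ x ∂lamN) ^ (1/2:ℝ) * (∫⁻ x in s, F₂ x ∂lamN) ^ (1/2:ℝ) := hH
      _ = (P₁ s) ^ (2⁻¹:ℝ) * (P₂ s) ^ (2⁻¹:ℝ) := by
          rw [hP₁', hP₂', withDensity_apply _ hs, withDensity_apply _ hs, one_div]
  -- bound on A and on the complement
  set T : Set (Fin N → ℝ) := {x | (h : ℝ) / 2 ≤ |τhat x - ((τ : ℝ) + (h : ℝ))|} with hT_def
  set M : ENNReal := max (P₁ A) (P₂ T) with hM_def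
  have haM : P₁ A ≤ M := le_max_left _ _
  have hbM : P₂ Aᶜ ≤ M := le_trans (measure_mono hsub) (le_max_right _ _)
  have hone : ∀ (P : Measure (Fin N → ℝ)) [IsProbabilityMeasure P] (s : Set (Fin N → ℝ)),
      (P s) ^ (2⁻¹:ℝ) ≤ 1 := fun P _ s =>
    ENNReal.rpow_le_one (prob_le_one) (by norm_num)
  have hA1 : ∫⁻ x in A, G x ∂lamN ≤ M ^ (2⁻¹:ℝ) :=
    calc ∫⁻ x in A, G x ∂lamN ≤ (P₁ A) ^ (2⁻¹:ℝ) * (P₂ A) ^ (2⁻¹:ℝ) := hHolder A hA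
      _ ≤ (P₁ A) ^ (2⁻¹:ℝ) * 1 := mul_le_mul_right (hone P₂ A) _
      _ = (P₁ A) ^ (2⁻¹:ℝ) := mul_one _
      _ ≤ M ^ (2⁻¹:ℝ) := ENNReal.rpow_le_rpow haM (by norm_num)
  have hA2 : ∫⁻ x in Aᶜ, G x ∂lamN ≤ M ^ (2⁻¹:ℝ) :=
    calc ∫⁻ x in Aᶜ, G x ∂lamN ≤ (P₁ Aᶜ) ^ (2⁻¹:ℝ) * (P₂ Aᶜ) ^ (2⁻¹:ℝ) :=
          hHolder Aᶜ hA.compl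
      _ ≤ 1 * (P₂ Aᶜ) ^ (2⁻¹:ℝ) := mul_le_mul_left (hone P₁ Aᶜ) _
      _ = (P₂ Aᶜ) ^ (2⁻¹:ℝ) := one_mul _
      _ ≤ M ^ (2⁻¹:ℝ) := ENNReal.rpow_le_rpow hbM (by norm_num)
  have hHelLe : ENNReal.ofReal (Real.exp (-(S/4))) ≤ 2 * M ^ (2⁻¹:ℝ) := by
    rw [← hHel, ← lintegral_add_compl G hA (μ := lamN), two_mul]
    exact add_le_add hA1 hA2
  -- squaring
  have hMsq : M ^ (2⁻¹:ℝ) * M ^ (2⁻¹:ℝ) = M := by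
    rw [← sq, ← ENNReal.rpow_natCast (M ^ (2⁻¹:ℝ)) 2, ← ENNReal.rpow_mul]
    norm_num
  have hreal : 4 * δ ≤ Real.exp (-(S/4)) * Real.exp (-(S/4)) := by
    rw [← Real.exp_add, show -(S/4) + -(S/4) = -(S/2) by ring]
    have hlog : Real.log (4 * δ) ≤ -(S/2) := by
      have h1 : Real.log (1 / (4 * δ)) = - Real.log (4 * δ) := by
        rw [one_div, Real.log_inv]
      linarith [hKL, hS0, h1 ▸ hKL]
    calc 4 * δ = Real.exp (Real.log (4 * δ)) := (Real.exp_log (by positivity)).symm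
      _ ≤ Real.exp (-(S/2)) := Real.exp_le_exp.mpr hlog
  have h4M : ENNReal.ofReal (4 * δ) ≤ 4 * M := by
    calc ENNReal.ofReal (4 * δ)
        ≤ ENNReal.ofReal (Real.exp (-(S/4)) * Real.exp (-(S/4))) :=
          ENNReal.ofReal_le_ofReal hreal
      _ = ENNReal.ofReal (Real.exp (-(S/4))) * ENNReal.ofReal (Real.exp (-(S/4))) :=
          ENNReal.ofReal_mul (Real.exp_nonneg _)
      _ ≤ (2 * M ^ (2⁻¹:ℝ)) * (2 * M ^ (2⁻¹:ℝ)) := mul_le_mul' hHelLe hHelLe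
      _ = 4 * (M ^ (2⁻¹:ℝ) * M ^ (2⁻¹:ℝ)) := by ring
      _ = 4 * M := by rw [hMsq]
  have hfinal : ENNReal.ofReal δ ≤ M := by
    have h4δ : ENNReal.ofReal (4 * δ) = 4 * ENNReal.ofReal δ := by
      rw [ENNReal.ofReal_mul (by norm_num : (0:ℝ) ≤ 4)]
      norm_num
    rw [h4δ] at h4M
    exact (ENNReal.mul_le_mul_iff_right (by norm_num) (by norm_num)).mp h4M
  exact hfinal
end

section
/- Maximizer of the weighted CUSUM of a single-change mean (Lemma A.1, first claim). Suppose μ ∈ ℝ^N has a single change at τ on [s,e]. Then W_{s,e}^{μ}(τ) = max_{s ≤ b < e} W_{s,e}^{μ}(b), i.e., the weighted CUSUM of the mean vector over [s,e] is maximized at the change point τ. -/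
open MeasureTheory ProbabilityTheory

/-- Cumulative weight `S^w_{u:v} = Σ_{i=u}^{v} w_i`. -/
noncomputable def Sw (w : ℕ → ℝ) (u v : ℕ) : ℝ := ∑ i ∈ Finset.Icc u v, w i

/-- Weighted inner product `⟨x,y⟩_w = Σ_{i=1}^{N} w_i x_i y_i`. -/
noncomputable def winner (N : ℕ) (w x y : ℕ → ℝ) : ℝ :=
  ∑ i ∈ Finset.Icc 1 N, w i * x i * y i

/-- Weighted norm `‖x‖_w = ⟨x,x⟩_w^{1/2}`. -/
noncomputable def wnorm (N : ℕ) (w x : ℕ → ℝ) : ℝ := Real.sqrt (winner N w x x)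

/-- Weighted CUSUM statistic `W_{s,e}^{v}(b)`. -/
noncomputable def wCUSUM (w v : ℕ → ℝ) (s e b : ℕ) : ℝ :=
  Real.sqrt (Sw w s b * Sw w (b + 1) e / Sw w s e) *
    |(Sw w s b)⁻¹ * ∑ i ∈ Finset.Icc s b, w i * v i
      - (Sw w (b + 1) e)⁻¹ * ∑ i ∈ Finset.Icc (b + 1) e, w i * v i|

/-- The CUSUM contrast vector `ψ_{s,e}^{b}`. -/
noncomputable def psiContrast (w : ℕ → ℝ) (s e b : ℕ) (i : ℕ) : ℝ :=
  if s ≤ i ∧ i ≤ b then Real.sqrt (Sw w (b + 1) e / (Sw w s b * Sw w s e))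
  else if b < i ∧ i ≤ e then -Real.sqrt (Sw w s b / (Sw w s e * Sw w (b + 1) e))
  else 0

lemma sum_Icc_split (f : ℕ → ℝ) {u m v : ℕ} (h1 : u ≤ m + 1) (h2 : m ≤ v) :
    ∑ i ∈ Finset.Icc u v, f i
      = ∑ i ∈ Finset.Icc u m, f i + ∑ i ∈ Finset.Icc (m + 1) v, f i := by
  rw [← Finset.sum_union (by
    rw [Finset.disjoint_left]
    intro a ha hb
    simp only [Finset.mem_Icc] at ha hb
    omega)]
  congr 1
  ext i
  simp only [Finset.mem_union, Finset.mem_Icc]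
  omega

lemma sum_const_mul (w μ : ℕ → ℝ) (c : ℝ) {u v : ℕ}
    (h : ∀ i, u ≤ i → i ≤ v → μ i = c) :
    ∑ i ∈ Finset.Icc u v, w i * μ i = c * ∑ i ∈ Finset.Icc u v, w i := by
  rw [Finset.mul_sum]
  refine Finset.sum_congr rfl fun i hi => ?_
  simp only [Finset.mem_Icc] at hi
  rw [h i hi.1 hi.2]; ring

lemma Sw_pos (w : ℕ → ℝ) (hw : ∀ i, 0 < w i) {u v : ℕ} (h : u ≤ v) :
    0 < Sw w u v :=
  Finset.sum_pos (fun i _ => hw i) (Finset.nonempty_Icc.2 h)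

lemma Sw_nonneg (w : ℕ → ℝ) (hw : ∀ i, 0 < w i) (u v : ℕ) : 0 ≤ Sw w u v :=
  Finset.sum_nonneg fun i _ => (hw i).le


/-- **Maximizer of the weighted CUSUM of a single-change mean (Lemma A.1, first claim).**
If `μ` has a single change at `τ` on `[s,e]`, then the weighted CUSUM of the mean
vector over `[s,e]` is maximized at the change point `τ`:
`W_{s,e}^{μ}(τ) = max_{s ≤ b < e} W_{s,e}^{μ}(b)`. -/
theorem wcusum_single_change_maximized_at_change_point
    (N : ℕ) (w : ℕ → ℝ) (hw : ∀ i, 0 < w i)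
    (μvec : ℕ → ℝ) (s e τ : ℕ)
    (hs : 1 ≤ s) (hsτ : s ≤ τ) (hτe : τ < e) (heN : e ≤ N)
    (α β : ℝ)
    (hα : ∀ i, s ≤ i → i ≤ τ → μvec i = α)
    (hβ : ∀ i, τ < i → i ≤ e → μvec i = β) :
    ∀ b, s ≤ b → b < e → wCUSUM w μvec s e b ≤ wCUSUM w μvec s e τ := by
  intro b hsb hbe
  have hA0 : 0 < Sw w s τ := Sw_pos w hw hsτ
  have hD : 0 < Sw w (τ + 1) e := Sw_pos w hw hτe
  have hA : 0 < Sw w s b := Sw_pos w hw hsb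
  have hB : 0 < Sw w (b + 1) e := Sw_pos w hw hbe
  have hT : 0 < Sw w s e := Sw_pos w hw (le_of_lt (lt_of_le_of_lt hsb hbe))
  set A0 : ℝ := Sw w s τ
  set D : ℝ := Sw w (τ + 1) e
  set A : ℝ := Sw w s b
  set B : ℝ := Sw w (b + 1) e
  set T : ℝ := Sw w s e
  -- value at τ
  have sumα : ∑ i ∈ Finset.Icc s τ, w i * μvec i = α * A0 :=
    sum_const_mul w μvec α hα
  have sumβ : ∑ i ∈ Finset.Icc (τ + 1) e, w i * μvec i = β * D :=
    sum_const_mul w μvec β (fun i h1 h2 => hβ i (by omega) h2)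
  have hR : wCUSUM w μvec s e τ = Real.sqrt (A0 * D / T) * |α - β| := by
    rw [wCUSUM, sumα, sumβ]
    congr 1
    congr 1
    field_simp
    exact congrArg₂ (· - ·) (mul_div_cancel_right₀ α hA0.ne') (mul_div_cancel_right₀ β hD.ne')
  rcases le_or_gt b τ with hbτ | hτb
  · -- b ≤ τ
    have hCsplit : B = Sw w (b + 1) τ + D := sum_Icc_split w (by omega) (by omega)
    set C : ℝ := Sw w (b + 1) τ with hCdef
    have hC0 : 0 ≤ C := Sw_nonneg w hw _ _
    have hDB : D ≤ B := by linarith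
    have hA0split : A0 = A + C := by
      rw [hCdef]; exact sum_Icc_split w (by omega) hbτ
    have hAA0 : A ≤ A0 := by linarith
    have sum1 : ∑ i ∈ Finset.Icc s b, w i * μvec i = α * A :=
      sum_const_mul w μvec α (fun i h1 h2 => hα i h1 (by omega))
    have sum2 : ∑ i ∈ Finset.Icc (b + 1) e, w i * μvec i = α * C + β * D := by
      rw [sum_Icc_split (fun i => w i * μvec i) (by omega) (by omega : τ ≤ e)]
      rw [sum_const_mul w μvec α (fun i h1 h2 => hα i (by omega) h2), sumβ, hCdef, Sw]
    have hL : wCUSUM w μvec s e b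
        = Real.sqrt (A * B / T) * (|α - β| * (D / B)) := by
      rw [wCUSUM, sum1, sum2]
      congr 1
      have hval : A⁻¹ * (α * A) - B⁻¹ * (α * C + β * D) = (α - β) * (D / B) := by
        have hCB : C = B - D := by linarith
        rw [hCB]
        field_simp
        ring
      rw [hval, abs_mul, abs_of_nonneg (by positivity : (0:ℝ) ≤ D / B)]
    rw [hL, hR]
    rw [mul_comm (Real.sqrt (A * B / T)) _, mul_assoc, mul_comm (Real.sqrt (A0 * D / T)) _]
    apply mul_le_mul_of_nonneg_left _ (abs_nonneg _)
    have h1 : D / B * Real.sqrt (A * B / T) = Real.sqrt (A * B / T * (D / B) ^ 2) := by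
      rw [Real.sqrt_mul (by positivity), Real.sqrt_sq (by positivity)]
      ring
    rw [h1]
    apply Real.sqrt_le_sqrt
    have h2 : A * B / T * (D / B) ^ 2 = A * D ^ 2 / (B * T) := by
      field_simp
    rw [h2, div_le_div_iff₀ (by positivity) (by positivity)]
    nlinarith [mul_le_mul_of_nonneg_right (mul_le_mul hAA0 hDB hD.le hA0.le)
      (by positivity : (0:ℝ) ≤ D * T)]
  · -- τ < b
    have hDsplit : D = Sw w (τ + 1) b + B := sum_Icc_split w (by omega) (by omega)
    set E : ℝ := Sw w (τ + 1) b with hEdef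
    have hE0 : 0 ≤ E := Sw_nonneg w hw _ _
    have hBD : B ≤ D := by linarith
    have hAsplit : A = A0 + E := by
      rw [hEdef]; exact sum_Icc_split w (by omega) (by omega)
    have hA0A : A0 ≤ A := by linarith
    have sum1 : ∑ i ∈ Finset.Icc s b, w i * μvec i = α * A0 + β * E := by
      rw [sum_Icc_split (fun i => w i * μvec i) (by omega) (by omega : τ ≤ b)]
      rw [sumα, sum_const_mul w μvec β (fun i h1 h2 => hβ i (by omega) (by omega)), hEdef, Sw]
    have sum2 : ∑ i ∈ Finset.Icc (b + 1) e, w i * μvec i = β * B :=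
      sum_const_mul w μvec β (fun i h1 h2 => hβ i (by omega) h2)
    have hL : wCUSUM w μvec s e b
        = Real.sqrt (A * B / T) * (|α - β| * (A0 / A)) := by
      rw [wCUSUM, sum1, sum2]
      congr 1
      have hval : A⁻¹ * (α * A0 + β * E) - B⁻¹ * (β * B) = (α - β) * (A0 / A) := by
        have hEA : E = A - A0 := by linarith
        rw [hEA]
        field_simp
        ring
      rw [hval, abs_mul, abs_of_nonneg (by positivity : (0:ℝ) ≤ A0 / A)]
    rw [hL, hR]
    rw [mul_comm (Real.sqrt (A * B / T)) _, mul_assoc, mul_comm (Real.sqrt (A0 * D / T)) _]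
    apply mul_le_mul_of_nonneg_left _ (abs_nonneg _)
    have h1 : A0 / A * Real.sqrt (A * B / T) = Real.sqrt (A * B / T * (A0 / A) ^ 2) := by
      rw [Real.sqrt_mul (by positivity), Real.sqrt_sq (by positivity)]
      ring
    rw [h1]
    apply Real.sqrt_le_sqrt
    have h2 : A * B / T * (A0 / A) ^ 2 = A0 ^ 2 * B / (A * T) := by
      field_simp
    rw [h2, div_le_div_iff₀ (by positivity) (by positivity)]
    nlinarith [mul_le_mul_of_nonneg_right (mul_le_mul hA0A hBD hB.le hA.le)
      (by positivity : (0:ℝ) ≤ A0 * T)]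
end

section
/- Projection identity for the weighted CUSUM (Lemma A.1, equation (8)). Suppose μ ∈ ℝ^N has a single change at τ on [s,e]. Then for every s ≤ b < e: ‖ψ_{s,e}^{b}·⟨ψ_{s,e}^{b}, μ⟩_w − ψ_{s,e}^{τ}·⟨ψ_{s,e}^{τ}, μ⟩_w‖_w² = (W_{s,e}^{μ}(τ))² − (W_{s,e}^{μ}(b))². -/
open MeasureTheory ProbabilityTheory

lemma Sw_split (w : ℕ → ℝ) {u m v : ℕ} (h1 : u ≤ m) (h2 : m < v) :
    Sw w u v = Sw w u m + Sw w (m + 1) v := by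
  unfold Sw
  rw [show Finset.Icc u v = Finset.Icc u m ∪ Finset.Icc (m + 1) v from by
        ext i; simp only [Finset.mem_Icc, Finset.mem_union]; omega,
      Finset.sum_union (by
        rw [Finset.disjoint_left]; intro i hi hj
        simp only [Finset.mem_Icc] at hi hj; omega)]

lemma sqrtA1 {S1 S2 S : ℝ} (h1 : 0 < S1) (h2 : 0 < S2) (hS : S = S1 + S2) :
    Real.sqrt (S2 / (S1 * S)) * S1 = Real.sqrt (S1 * S2 / S) := by
  subst hS
  have h1' := h1.ne'
  have hS0 : (0:ℝ) < S1 + S2 := by linarith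
  rw [show Real.sqrt (S2 / (S1 * (S1 + S2))) * S1
        = Real.sqrt (S2 / (S1 * (S1 + S2))) * Real.sqrt (S1 ^ 2) from by
        rw [Real.sqrt_sq h1.le],
      ← Real.sqrt_mul (by positivity)]
  congr 1
  field_simp

lemma sqrtA2 {S1 S2 S : ℝ} (h1 : 0 < S1) (h2 : 0 < S2) (hS : S = S1 + S2) :
    Real.sqrt (S1 / (S * S2)) * S2 = Real.sqrt (S1 * S2 / S) := by
  subst hS
  have h2' := h2.ne'
  have hS0 : (0:ℝ) < S1 + S2 := by linarith
  rw [show Real.sqrt (S1 / ((S1 + S2) * S2)) * S2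
        = Real.sqrt (S1 / ((S1 + S2) * S2)) * Real.sqrt (S2 ^ 2) from by
        rw [Real.sqrt_sq h2.le],
      ← Real.sqrt_mul (by positivity)]
  congr 1
  field_simp

lemma sqrt_balance {S1 S2 S : ℝ} (h1 : 0 < S1) (h2 : 0 < S2) (hS : S = S1 + S2) :
    Real.sqrt (S2 / (S1 * S)) * S1 = Real.sqrt (S1 / (S * S2)) * S2 := by
  rw [sqrtA1 h1 h2 hS, sqrtA2 h1 h2 hS]

lemma sqrtA3 {S1 S2 S : ℝ} (h1 : 0 < S1) (h2 : 0 < S2) (hS : S = S1 + S2) :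
    Real.sqrt (S2 / (S1 * S)) ^ 2 * S1 + Real.sqrt (S1 / (S * S2)) ^ 2 * S2 = 1 := by
  subst hS
  have hS0 : (0:ℝ) < S1 + S2 := by linarith
  rw [Real.sq_sqrt (by positivity), Real.sq_sqrt (by positivity)]
  field_simp
  ring

lemma sqrtA4 {S1 S2 S : ℝ} (h1 : 0 < S1) (h2 : 0 < S2) (hS : S = S1 + S2) :
    Real.sqrt (S1 / (S * S2)) * S2
      * (Real.sqrt (S2 / (S1 * S)) + Real.sqrt (S1 / (S * S2))) = 1 := by
  subst hS
  have hS0 : (0:ℝ) < S1 + S2 := by linarith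
  have h1' := h1.ne'
  have h2' := h2.ne'
  have hS0' := hS0.ne'
  have hpq : Real.sqrt (S1 / ((S1 + S2) * S2)) * Real.sqrt (S2 / (S1 * (S1 + S2)))
      = (S1 + S2)⁻¹ := by
    rw [← Real.sqrt_mul (by positivity),
        show S1 / ((S1 + S2) * S2) * (S2 / (S1 * (S1 + S2))) = ((S1 + S2)⁻¹) ^ 2 from by
          field_simp,
        Real.sqrt_sq (by positivity)]
  have hq2 : Real.sqrt (S1 / ((S1 + S2) * S2)) ^ 2 = S1 / ((S1 + S2) * S2) :=
    Real.sq_sqrt (by positivity)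
  rw [show Real.sqrt (S1 / ((S1 + S2) * S2)) * S2
        * (Real.sqrt (S2 / (S1 * (S1 + S2))) + Real.sqrt (S1 / ((S1 + S2) * S2)))
      = S2 * (Real.sqrt (S1 / ((S1 + S2) * S2)) * Real.sqrt (S2 / (S1 * (S1 + S2))))
        + Real.sqrt (S1 / ((S1 + S2) * S2)) ^ 2 * S2 from by ring,
      hpq, hq2]
  field_simp
  ring

lemma psi_left (w : ℕ → ℝ) (s e c i : ℕ) (h1 : s ≤ i) (h2 : i ≤ c) :
    psiContrast w s e c i = Real.sqrt (Sw w (c + 1) e / (Sw w s c * Sw w s e)) := by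
  unfold psiContrast; rw [if_pos ⟨h1, h2⟩]

lemma psi_right (w : ℕ → ℝ) (s e c i : ℕ) (h2 : c < i) (h3 : i ≤ e) :
    psiContrast w s e c i = -Real.sqrt (Sw w s c / (Sw w s e * Sw w (c + 1) e)) := by
  unfold psiContrast; rw [if_neg (by omega), if_pos ⟨h2, h3⟩]

lemma psi_zero (w : ℕ → ℝ) (s e c i : ℕ) (hsc : s ≤ c) (hce : c ≤ e) (h : ¬(s ≤ i ∧ i ≤ e)) :
    psiContrast w s e c i = 0 := by
  unfold psiContrast; rw [if_neg (by omega), if_neg (by omega)]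

lemma winner_psi (N : ℕ) (w g : ℕ → ℝ) {s e c : ℕ}
    (hs : 1 ≤ s) (hsc : s ≤ c) (hce : c < e) (heN : e ≤ N) :
    winner N w (psiContrast w s e c) g
      = Real.sqrt (Sw w (c + 1) e / (Sw w s c * Sw w s e))
          * (∑ i ∈ Finset.Icc s c, w i * g i)
        - Real.sqrt (Sw w s c / (Sw w s e * Sw w (c + 1) e))
          * (∑ i ∈ Finset.Icc (c + 1) e, w i * g i) := by
  unfold winner
  rw [← Finset.sum_subset (Finset.Icc_subset_Icc hs heN) (fun i _ hi => by
      rw [psi_zero w s e c i hsc hce.le (by simpa [Finset.mem_Icc] using hi)]; ring)]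
  rw [show Finset.Icc s e = Finset.Icc s c ∪ Finset.Icc (c + 1) e from by
        ext i; simp only [Finset.mem_Icc, Finset.mem_union]; omega,
      Finset.sum_union (by
        rw [Finset.disjoint_left]; intro i hi hj
        simp only [Finset.mem_Icc] at hi hj; omega)]
  have hL : ∑ i ∈ Finset.Icc s c, w i * psiContrast w s e c i * g i
      = Real.sqrt (Sw w (c + 1) e / (Sw w s c * Sw w s e))
          * ∑ i ∈ Finset.Icc s c, w i * g i := by
    rw [Finset.mul_sum]
    refine Finset.sum_congr rfl fun i hi => ?_
    simp only [Finset.mem_Icc] at hi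
    rw [psi_left w s e c i hi.1 hi.2]; ring
  have hR : ∑ i ∈ Finset.Icc (c + 1) e, w i * psiContrast w s e c i * g i
      = -(Real.sqrt (Sw w s c / (Sw w s e * Sw w (c + 1) e))
          * ∑ i ∈ Finset.Icc (c + 1) e, w i * g i) := by
    rw [Finset.mul_sum, ← Finset.sum_neg_distrib]
    refine Finset.sum_congr rfl fun i hi => ?_
    simp only [Finset.mem_Icc] at hi
    rw [psi_right w s e c i (by omega) hi.2]; ring
  rw [hL, hR]; ring

lemma winner_psi_self (N : ℕ) (w : ℕ → ℝ) (hw : ∀ i, 0 < w i) {s e c : ℕ}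
    (hs : 1 ≤ s) (hsc : s ≤ c) (hce : c < e) (heN : e ≤ N) :
    winner N w (psiContrast w s e c) (psiContrast w s e c) = 1 := by
  rw [winner_psi N w _ hs hsc hce heN]
  have hA : ∑ i ∈ Finset.Icc s c, w i * psiContrast w s e c i
      = Real.sqrt (Sw w (c + 1) e / (Sw w s c * Sw w s e)) * Sw w s c := by
    have h' : ∑ i ∈ Finset.Icc s c, w i * psiContrast w s e c i
        = ∑ i ∈ Finset.Icc s c,
            Real.sqrt (Sw w (c + 1) e / (Sw w s c * Sw w s e)) * w i :=
      Finset.sum_congr rfl fun i hi => by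
        simp only [Finset.mem_Icc] at hi
        rw [psi_left w s e c i hi.1 hi.2]; ring
    rw [h', ← Finset.mul_sum]; rfl
  have hB : ∑ i ∈ Finset.Icc (c + 1) e, w i * psiContrast w s e c i
      = -(Real.sqrt (Sw w s c / (Sw w s e * Sw w (c + 1) e)) * Sw w (c + 1) e) := by
    have h' : ∑ i ∈ Finset.Icc (c + 1) e, w i * psiContrast w s e c i
        = ∑ i ∈ Finset.Icc (c + 1) e,
            -Real.sqrt (Sw w s c / (Sw w s e * Sw w (c + 1) e)) * w i :=
      Finset.sum_congr rfl fun i hi => by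
        simp only [Finset.mem_Icc] at hi
        rw [psi_right w s e c i (by omega) hi.2]; ring
    rw [h', ← Finset.mul_sum, neg_mul]; rfl
  rw [hA, hB]
  have h1 : 0 < Sw w s c := Sw_pos w hw hsc
  have h2 : 0 < Sw w (c + 1) e := Sw_pos w hw hce
  have hspl : Sw w s e = Sw w s c + Sw w (c + 1) e := Sw_split w hsc hce
  linear_combination sqrtA3 h1 h2 hspl

lemma wCUSUM_sq_eq (N : ℕ) (w μ : ℕ → ℝ) (hw : ∀ i, 0 < w i) {s e c : ℕ}
    (hs : 1 ≤ s) (hsc : s ≤ c) (hce : c < e) (heN : e ≤ N) :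
    (wCUSUM w μ s e c) ^ 2 = (winner N w (psiContrast w s e c) μ) ^ 2 := by
  rw [winner_psi N w μ hs hsc hce heN]
  have h1 : 0 < Sw w s c := Sw_pos w hw hsc
  have h2 : 0 < Sw w (c + 1) e := Sw_pos w hw hce
  have hspl : Sw w s e = Sw w s c + Sw w (c + 1) e := Sw_split w hsc hce
  have hS : 0 < Sw w s e := by rw [hspl]; linarith
  unfold wCUSUM
  rw [mul_pow, sq_abs, Real.sq_sqrt (by positivity)]
  have hp : Real.sqrt (Sw w (c + 1) e / (Sw w s c * Sw w s e))
      = Real.sqrt (Sw w s c * Sw w (c + 1) e / Sw w s e) / Sw w s c := by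
    rw [eq_div_iff h1.ne', sqrtA1 h1 h2 hspl]
  have hq : Real.sqrt (Sw w s c / (Sw w s e * Sw w (c + 1) e))
      = Real.sqrt (Sw w s c * Sw w (c + 1) e / Sw w s e) / Sw w (c + 1) e := by
    rw [eq_div_iff h2.ne', sqrtA2 h1 h2 hspl]
  rw [hp, hq]
  have hr : Real.sqrt (Sw w s c * Sw w (c + 1) e / Sw w s e) ^ 2
      = Sw w s c * Sw w (c + 1) e / Sw w s e := Real.sq_sqrt (by positivity)
  linear_combination (-((Sw w s c)⁻¹ * (∑ i ∈ Finset.Icc s c, w i * μ i)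
      - (Sw w (c + 1) e)⁻¹ * (∑ i ∈ Finset.Icc (c + 1) e, w i * μ i)) ^ 2) * hr

lemma winner_expand (N : ℕ) (w x y : ℕ → ℝ) (cb cτ : ℝ) :
    winner N w (fun i => x i * cb - y i * cτ) (fun i => x i * cb - y i * cτ)
      = cb ^ 2 * winner N w x x - 2 * cb * cτ * winner N w x y
        + cτ ^ 2 * winner N w y y := by
  unfold winner
  rw [Finset.mul_sum, Finset.mul_sum, Finset.mul_sum, ← Finset.sum_sub_distrib,
      ← Finset.sum_add_distrib]
  exact Finset.sum_congr rfl fun i _ => by ring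

lemma winner_self_nonneg (N : ℕ) (w x : ℕ → ℝ) (hw : ∀ i, 0 < w i) :
    0 ≤ winner N w x x :=
  Finset.sum_nonneg fun i _ => by
    rw [mul_assoc]; exact mul_nonneg (hw i).le (mul_self_nonneg _)

/-- indicator of `{i : τ < i}` -/
noncomputable def tind (τ i : ℕ) : ℝ := if τ < i then 1 else 0

lemma key_alg (pb qb pτ qτ At Bt S1b S2b S1τ S2τ α β : ℝ)
    (hzb : pb * S1b = qb * S2b) (hzτ : pτ * S1τ = qτ * S2τ)
    (hA4 : qτ * S2τ * (pτ + qτ) = 1) :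
    pb * (α * S1b + (β - α) * At) - qb * (α * S2b + (β - α) * Bt)
      = (pτ * (α * S1τ) - qτ * (β * S2τ))
        * (pb * (pτ * S1b - (pτ + qτ) * At) - qb * (pτ * S2b - (pτ + qτ) * Bt)) := by
  linear_combination (α - (pτ * (α * S1τ) - qτ * (β * S2τ)) * pτ) * hzb
    + (pb * At - qb * Bt) * α * (pτ + qτ) * hzτ
    - (pb * At - qb * Bt) * (β - α) * hA4

lemma key (N : ℕ) (w : ℕ → ℝ) (hw : ∀ i, 0 < w i) (μvec : ℕ → ℝ) (s e τ b : ℕ)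
    (hs : 1 ≤ s) (hsτ : s ≤ τ) (hτe : τ < e) (heN : e ≤ N)
    (α β : ℝ)
    (hα : ∀ i, s ≤ i → i ≤ τ → μvec i = α)
    (hβ : ∀ i, τ < i → i ≤ e → μvec i = β)
    (hsb : s ≤ b) (hbe : b < e) :
    winner N w (psiContrast w s e b) μvec
      = winner N w (psiContrast w s e τ) μvec
        * winner N w (psiContrast w s e b) (psiContrast w s e τ) := by
  rw [winner_psi N w μvec hs hsb hbe heN, winner_psi N w μvec hs hsτ hτe heN,
      winner_psi N w (psiContrast w s e τ) hs hsb hbe heN]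
  have hAb : (∑ i ∈ Finset.Icc s b, w i * μvec i)
      = α * Sw w s b + (β - α) * (∑ i ∈ Finset.Icc s b, w i * tind τ i) := by
    unfold Sw
    rw [Finset.mul_sum, Finset.mul_sum, ← Finset.sum_add_distrib]
    refine Finset.sum_congr rfl fun i hi => ?_
    simp only [Finset.mem_Icc] at hi
    unfold tind
    by_cases hc : τ < i
    · rw [if_pos hc, hβ i hc (by omega)]; ring
    · rw [if_neg hc, hα i hi.1 (by omega)]; ring
  have hBb : (∑ i ∈ Finset.Icc (b + 1) e, w i * μvec i)
      = α * Sw w (b + 1) e + (β - α) * (∑ i ∈ Finset.Icc (b + 1) e, w i * tind τ i) := by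
    unfold Sw
    rw [Finset.mul_sum, Finset.mul_sum, ← Finset.sum_add_distrib]
    refine Finset.sum_congr rfl fun i hi => ?_
    simp only [Finset.mem_Icc] at hi
    unfold tind
    by_cases hc : τ < i
    · rw [if_pos hc, hβ i hc (by omega)]; ring
    · rw [if_neg hc, hα i (by omega) (by omega)]; ring
  have hAτ : (∑ i ∈ Finset.Icc s τ, w i * μvec i) = α * Sw w s τ := by
    unfold Sw
    rw [Finset.mul_sum]
    refine Finset.sum_congr rfl fun i hi => ?_
    simp only [Finset.mem_Icc] at hi
    rw [hα i hi.1 hi.2]; ring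
  have hBτ : (∑ i ∈ Finset.Icc (τ + 1) e, w i * μvec i) = β * Sw w (τ + 1) e := by
    unfold Sw
    rw [Finset.mul_sum]
    refine Finset.sum_congr rfl fun i hi => ?_
    simp only [Finset.mem_Icc] at hi
    rw [hβ i (by omega) hi.2]; ring
  have hAψ : (∑ i ∈ Finset.Icc s b, w i * psiContrast w s e τ i)
      = Real.sqrt (Sw w (τ + 1) e / (Sw w s τ * Sw w s e)) * Sw w s b
        - (Real.sqrt (Sw w (τ + 1) e / (Sw w s τ * Sw w s e))
            + Real.sqrt (Sw w s τ / (Sw w s e * Sw w (τ + 1) e)))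
          * (∑ i ∈ Finset.Icc s b, w i * tind τ i) := by
    have h' : ∑ i ∈ Finset.Icc s b, w i * psiContrast w s e τ i
        = ∑ i ∈ Finset.Icc s b,
            (Real.sqrt (Sw w (τ + 1) e / (Sw w s τ * Sw w s e)) * w i
              - (Real.sqrt (Sw w (τ + 1) e / (Sw w s τ * Sw w s e))
                  + Real.sqrt (Sw w s τ / (Sw w s e * Sw w (τ + 1) e)))
                * (w i * tind τ i)) :=
      Finset.sum_congr rfl fun i hi => by
        simp only [Finset.mem_Icc] at hi
        unfold tind
        by_cases hc : τ < i
        · rw [if_pos hc, psi_right w s e τ i hc (by omega)]; ring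
        · rw [if_neg hc, psi_left w s e τ i hi.1 (by omega)]; ring
    rw [h', Finset.sum_sub_distrib, ← Finset.mul_sum, ← Finset.mul_sum]; rfl
  have hBψ : (∑ i ∈ Finset.Icc (b + 1) e, w i * psiContrast w s e τ i)
      = Real.sqrt (Sw w (τ + 1) e / (Sw w s τ * Sw w s e)) * Sw w (b + 1) e
        - (Real.sqrt (Sw w (τ + 1) e / (Sw w s τ * Sw w s e))
            + Real.sqrt (Sw w s τ / (Sw w s e * Sw w (τ + 1) e)))
          * (∑ i ∈ Finset.Icc (b + 1) e, w i * tind τ i) := by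
    have h' : ∑ i ∈ Finset.Icc (b + 1) e, w i * psiContrast w s e τ i
        = ∑ i ∈ Finset.Icc (b + 1) e,
            (Real.sqrt (Sw w (τ + 1) e / (Sw w s τ * Sw w s e)) * w i
              - (Real.sqrt (Sw w (τ + 1) e / (Sw w s τ * Sw w s e))
                  + Real.sqrt (Sw w s τ / (Sw w s e * Sw w (τ + 1) e)))
                * (w i * tind τ i)) :=
      Finset.sum_congr rfl fun i hi => by
        simp only [Finset.mem_Icc] at hi
        unfold tind
        by_cases hc : τ < i
        · rw [if_pos hc, psi_right w s e τ i hc (by omega)]; ring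
        · rw [if_neg hc, psi_left w s e τ i (by omega) (by omega)]; ring
    rw [h', Finset.sum_sub_distrib, ← Finset.mul_sum, ← Finset.mul_sum]; rfl
  rw [hAb, hBb, hAτ, hBτ, hAψ, hBψ]
  have h1b : 0 < Sw w s b := Sw_pos w hw hsb
  have h2b : 0 < Sw w (b + 1) e := Sw_pos w hw hbe
  have h1τ : 0 < Sw w s τ := Sw_pos w hw hsτ
  have h2τ : 0 < Sw w (τ + 1) e := Sw_pos w hw hτe
  have hsplb : Sw w s e = Sw w s b + Sw w (b + 1) e := Sw_split w hsb hbe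
  have hsplτ : Sw w s e = Sw w s τ + Sw w (τ + 1) e := Sw_split w hsτ hτe
  exact key_alg _ _ _ _ _ _ _ _ _ _ α β
    (sqrt_balance h1b h2b hsplb) (sqrt_balance h1τ h2τ hsplτ) (sqrtA4 h1τ h2τ hsplτ)

/-- **Projection identity for the weighted CUSUM (Lemma A.1, equation (8)).**
If `μ` has a single change at `τ` on `[s,e]`, then for every `s ≤ b < e`:
`‖ψ_{s,e}^{b}·⟨ψ_{s,e}^{b},μ⟩_w − ψ_{s,e}^{τ}·⟨ψ_{s,e}^{τ},μ⟩_w‖_w²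
  = (W_{s,e}^{μ}(τ))² − (W_{s,e}^{μ}(b))²`. -/
theorem wcusum_projection_identity
    (N : ℕ) (w : ℕ → ℝ) (hw : ∀ i, 0 < w i)
    (μvec : ℕ → ℝ) (s e τ : ℕ)
    (hs : 1 ≤ s) (hsτ : s ≤ τ) (hτe : τ < e) (heN : e ≤ N)
    (α β : ℝ)
    (hα : ∀ i, s ≤ i → i ≤ τ → μvec i = α)
    (hβ : ∀ i, τ < i → i ≤ e → μvec i = β) :
    ∀ b, s ≤ b → b < e →
      (wnorm N w (fun i =>
          psiContrast w s e b i * winner N w (psiContrast w s e b) μvec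
            - psiContrast w s e τ i * winner N w (psiContrast w s e τ) μvec)) ^ 2
        = (wCUSUM w μvec s e τ) ^ 2 - (wCUSUM w μvec s e b) ^ 2 := by
  intro b hsb hbe
  rw [wnorm, Real.sq_sqrt (winner_self_nonneg N w _ hw), winner_expand,
      winner_psi_self N w hw hs hsb hbe heN, winner_psi_self N w hw hs hsτ hτe heN,
      wCUSUM_sq_eq N w μvec hw hs hsτ hτe heN, wCUSUM_sq_eq N w μvec hw hs hsb hbe heN]
  have hkey := key N w hw μvec s e τ b hs hsτ hτe heN α β hα hβ hsb hbe
  linear_combination (2 * winner N w (psiContrast w s e b) μvec) * hkey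
end
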